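/- Let G be a pair of d-dimensional layer-permuted butterflies with left layer permutation π and right layer permutation σ, and fix q ≤ d, m = d − q. Then every connected component of the q-dimensional sub-butterfly connectivity graph of G is a complete bipartite graph with the same number of vertices on each side. -/

import Mathlib

/-- A binary string of length `d`. -/
abbrev BStr (d : ℕ) := Fin d → Bool

/-- The string `b` lies in the left sub-butterfly `x*` of a pair of
`d`-dimensional layer-permuted butterflies with left layer permutation `π`
(written `0`-based): bit `π i` of `b` equals `x i` for all `i < m = d - q`. -/
def leftSubMem (d q : ℕ) (π : Equiv.Perm (Fin d))
    (x : Fin (d - q) → Bool) (b : BStr d) : Prop :=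
  ∀ i : Fin (d - q), b (π (Fin.castLE (Nat.sub_le d q) i)) = x i

/-- The string `b` lies in the right sub-butterfly `*y` of a pair of
`d`-dimensional layer-permuted butterflies with right layer permutation `σ`
(written `0`-based): bit `σ (q + j)` of `b` equals `y j` for all
`j < m = d - q`. -/
def rightSubMem (d q : ℕ) (hq : q ≤ d) (σ : Equiv.Perm (Fin d))
    (y : Fin (d - q) → Bool) (b : BStr d) : Prop :=
  ∀ j : Fin (d - q), b (σ (Fin.castLE (by omega) (Fin.natAdd q j))) = y j

/-- The left sub-butterfly `x*` and the right sub-butterfly `*y` share at least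
one node on layer `d`. -/
def connRel (d q : ℕ) (hq : q ≤ d) (π σ : Equiv.Perm (Fin d))
    (x y : Fin (d - q) → Bool) : Prop :=
  ∃ b : BStr d, leftSubMem d q π x b ∧ rightSubMem d q hq σ y b

/-- The `q`-dimensional sub-butterfly connectivity graph of a pair of
`d`-dimensional layer-permuted butterflies: a bipartite graph whose left
vertices (`Sum.inl`) are the `2^m` left sub-butterflies `x*` and whose right
vertices (`Sum.inr`) are the `2^m` right sub-butterflies `*y`, adjacent iff
the two sub-butterflies share a node on layer `d`. -/
def connGraph (d q : ℕ) (hq : q ≤ d) (π σ : Equiv.Perm (Fin d)) :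
    SimpleGraph ((Fin (d - q) → Bool) ⊕ (Fin (d - q) → Bool)) where
  Adj u v :=
    (∃ x y, u = Sum.inl x ∧ v = Sum.inr y ∧ connRel d q hq π σ x y) ∨
    (∃ x y, u = Sum.inr y ∧ v = Sum.inl x ∧ connRel d q hq π σ x y)
  symm := by
    constructor
    rintro u v (⟨x, y, rfl, rfl, h⟩ | ⟨x, y, rfl, rfl, h⟩)
    · exact Or.inr ⟨x, y, rfl, rfl, h⟩
    · exact Or.inl ⟨x, y, rfl, rfl, h⟩
  loopless := by
    constructor
    rintro u (⟨x, y, h1, h2, -⟩ | ⟨x, y, h1, h2, -⟩) <;> subst h1 <;> simp at h2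


section Aux
attribute [local instance] Classical.propDecidable

variable (d q : ℕ) (hq : q ≤ d) (π σ : Equiv.Perm (Fin d))

def fL (i : Fin (d - q)) : Fin d := π (Fin.castLE (Nat.sub_le d q) i)

def gR (j : Fin (d - q)) : Fin d := σ (Fin.castLE (by omega) (Fin.natAdd q j))

lemma fL_inj : Function.Injective (fL d q π) := fun i i' h => by
  exact Fin.castLE_injective _ (π.injective h)

lemma gR_inj : Function.Injective (gR d q hq σ) := fun j j' h => by
  have := Fin.castLE_injective (show q + (d - q) ≤ d by omega) (σ.injective h)
  have h2 : (Fin.natAdd q j : Fin (q + (d-q))).1 = (Fin.natAdd q j' : Fin (q + (d-q))).1 :=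
    congrArg Fin.val this
  simp [Fin.natAdd] at h2
  exact Fin.ext h2

noncomputable def keyL (x : Fin (d - q) → Bool) (p : Fin d) : Option Bool :=
  if h : (∃ i, fL d q π i = p) ∧ (∃ j, gR d q hq σ j = p) then some (x h.1.choose) else none

noncomputable def keyR (y : Fin (d - q) → Bool) (p : Fin d) : Option Bool :=
  if h : (∃ i, fL d q π i = p) ∧ (∃ j, gR d q hq σ j = p) then some (y h.2.choose) else none

variable {d q hq π σ}

lemma keyL_eq_some {x : Fin (d - q) → Bool} {i : Fin (d - q)}
    (h2 : ∃ j, gR d q hq σ j = fL d q π i) :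
    keyL d q hq π σ x (fL d q π i) = some (x i) := by
  have h : (∃ i', fL d q π i' = fL d q π i) ∧ (∃ j, gR d q hq σ j = fL d q π i) := ⟨⟨i, rfl⟩, h2⟩
  rw [keyL, dif_pos h]
  exact congrArg (fun z => some (x z)) (fL_inj d q π h.1.choose_spec)

lemma keyR_eq_some {y : Fin (d - q) → Bool} {j : Fin (d - q)}
    (h1 : ∃ i, fL d q π i = gR d q hq σ j) :
    keyR d q hq π σ y (gR d q hq σ j) = some (y j) := by
  have h : (∃ i, fL d q π i = gR d q hq σ j) ∧ (∃ j', gR d q hq σ j' = gR d q hq σ j) :=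
    ⟨h1, ⟨j, rfl⟩⟩
  rw [keyR, dif_pos h]
  exact congrArg (fun z => some (y z)) (gR_inj d q hq σ h.2.choose_spec)

lemma connRel_iff_key {x y : Fin (d - q) → Bool} :
    connRel d q hq π σ x y ↔ keyL d q hq π σ x = keyR d q hq π σ y := by
  constructor
  · rintro ⟨b, hb1, hb2⟩
    funext p
    by_cases hc : (∃ i, fL d q π i = p) ∧ (∃ j, gR d q hq σ j = p)
    · obtain ⟨i, hi⟩ := hc.1
      obtain ⟨j, hj⟩ := hc.2
      subst hi
      rw [keyL_eq_some ⟨j, hj⟩, ← hj, keyR_eq_some ⟨i, hj.symm⟩]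
      have h1 : b (fL d q π i) = x i := hb1 i
      have h2 : b (gR d q hq σ j) = y j := hb2 j
      rw [hj] at h2
      rw [← h1, ← h2]
    · rw [keyL, dif_neg hc, keyR, dif_neg hc]
  · intro hkey
    classical
    refine ⟨fun p => if h : ∃ i, fL d q π i = p then x h.choose
      else if h2 : ∃ j, gR d q hq σ j = p then y h2.choose else false, ?_, ?_⟩
    · intro i
      show (if h : ∃ i', fL d q π i' = fL d q π i then x h.choose else _) = x i
      rw [dif_pos ⟨i, rfl⟩]
      exact congrArg x (fL_inj d q π (Exists.choose_spec (⟨i, rfl⟩ : ∃ i', fL d q π i' = fL d q π i)))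
    · intro j
      show (if h : ∃ i, fL d q π i = gR d q hq σ j then x h.choose
        else if h2 : ∃ j', gR d q hq σ j' = gR d q hq σ j then y h2.choose else false) = y j
      by_cases h : ∃ i, fL d q π i = gR d q hq σ j
      · rw [dif_pos h]
        have hc : (∃ i, fL d q π i = gR d q hq σ j) ∧ (∃ j', gR d q hq σ j' = gR d q hq σ j) :=
          ⟨h, ⟨j, rfl⟩⟩
        have hkk := congrFun hkey (gR d q hq σ j)
        rw [keyL, dif_pos hc, keyR, dif_pos hc] at hkk
        have e1 : h.choose = hc.1.choose :=
          fL_inj d q π (h.choose_spec.trans hc.1.choose_spec.symm)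
        have e2 : hc.2.choose = j := gR_inj d q hq σ hc.2.choose_spec
        rw [e1]
        rw [e2] at hkk
        exact Option.some.inj hkk
      · rw [dif_neg h, dif_pos ⟨j, rfl⟩]
        exact congrArg y (gR_inj d q hq σ
          (Exists.choose_spec (⟨j, rfl⟩ : ∃ j', gR d q hq σ j' = gR d q hq σ j)))

lemma keyL_eq_keyL_iff {x x' : Fin (d - q) → Bool} :
    keyL d q hq π σ x = keyL d q hq π σ x' ↔
      ∀ i, (∃ j, gR d q hq σ j = fL d q π i) → x i = x' i := by
  constructor
  · intro h i hj
    have := congrFun h (fL d q π i)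
    rw [keyL_eq_some hj, keyL_eq_some hj] at this
    exact Option.some.inj this
  · intro h
    funext p
    by_cases hc : (∃ i, fL d q π i = p) ∧ (∃ j, gR d q hq σ j = p)
    · rw [keyL, dif_pos hc, keyL, dif_pos hc]
      have : ∃ j, gR d q hq σ j = fL d q π hc.1.choose := by
        rw [hc.1.choose_spec]; exact hc.2
      exact congrArg some (h hc.1.choose this)
    · rw [keyL, dif_neg hc, keyL, dif_neg hc]

lemma keyR_eq_keyR_iff {y y' : Fin (d - q) → Bool} :
    keyR d q hq π σ y = keyR d q hq π σ y' ↔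
      ∀ j, (∃ i, fL d q π i = gR d q hq σ j) → y j = y' j := by
  constructor
  · intro h j hi
    have := congrFun h (gR d q hq σ j)
    rw [keyR_eq_some hi, keyR_eq_some hi] at this
    exact Option.some.inj this
  · intro h
    funext p
    by_cases hc : (∃ i, fL d q π i = p) ∧ (∃ j, gR d q hq σ j = p)
    · rw [keyR, dif_pos hc, keyR, dif_pos hc]
      have : ∃ i, fL d q π i = gR d q hq σ hc.2.choose := by
        rw [hc.2.choose_spec]; exact hc.1
      exact congrArg some (h hc.2.choose this)
    · rw [keyR, dif_neg hc, keyR, dif_neg hc]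

variable (d q hq π σ)

noncomputable def partnerR (x : Fin (d - q) → Bool) : Fin (d - q) → Bool :=
  fun j => if h : ∃ i, fL d q π i = gR d q hq σ j then x h.choose else false

noncomputable def partnerL (y : Fin (d - q) → Bool) : Fin (d - q) → Bool :=
  fun i => if h : ∃ j, gR d q hq σ j = fL d q π i then y h.choose else false

variable {d q hq π σ}

lemma keyR_partnerR (x : Fin (d - q) → Bool) :
    keyR d q hq π σ (partnerR d q hq π σ x) = keyL d q hq π σ x := by
  funext p
  by_cases hc : (∃ i, fL d q π i = p) ∧ (∃ j, gR d q hq σ j = p)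
  · rw [keyR, dif_pos hc, keyL, dif_pos hc]
    have hcond : ∃ i, fL d q π i = gR d q hq σ hc.2.choose := by
      rw [hc.2.choose_spec]; exact hc.1
    show some (if h : ∃ i, fL d q π i = gR d q hq σ hc.2.choose then x h.choose else false) = _
    rw [dif_pos hcond]
    refine congrArg some (congrArg x (fL_inj d q π ?_))
    rw [hcond.choose_spec, hc.2.choose_spec, hc.1.choose_spec]
  · rw [keyR, dif_neg hc, keyL, dif_neg hc]

lemma keyL_partnerL (y : Fin (d - q) → Bool) :
    keyL d q hq π σ (partnerL d q hq π σ y) = keyR d q hq π σ y := by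
  funext p
  by_cases hc : (∃ i, fL d q π i = p) ∧ (∃ j, gR d q hq σ j = p)
  · rw [keyL, dif_pos hc, keyR, dif_pos hc]
    have hcond : ∃ j, gR d q hq σ j = fL d q π hc.1.choose := by
      rw [hc.1.choose_spec]; exact hc.2
    show some (if h : ∃ j, gR d q hq σ j = fL d q π hc.1.choose then y h.choose else false) = _
    rw [dif_pos hcond]
    refine congrArg some (congrArg y (gR_inj d q hq σ ?_))
    rw [hcond.choose_spec, hc.1.choose_spec, hc.2.choose_spec]
  · rw [keyL, dif_neg hc, keyR, dif_neg hc]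

lemma adj_inl_inr {x y : Fin (d - q) → Bool} :
    (connGraph d q hq π σ).Adj (Sum.inl x) (Sum.inr y) ↔ connRel d q hq π σ x y := by
  constructor
  · rintro (⟨x', y', hx, hy, h⟩ | ⟨x', y', hx, hy, h⟩)
    · obtain rfl : x = x' := Sum.inl.inj hx
      obtain rfl : y = y' := Sum.inr.inj hy
      exact h
    · exact absurd hx (by simp)
  · intro h
    exact Or.inl ⟨x, y, rfl, rfl, h⟩

noncomputable def K : (Fin (d - q) → Bool) ⊕ (Fin (d - q) → Bool) → (Fin d → Option Bool) :=
  Sum.elim (keyL d q hq π σ) (keyR d q hq π σ)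

lemma K_adj {u v} (h : (connGraph d q hq π σ).Adj u v) :
    K (hq := hq) (π := π) (σ := σ) u = K (hq := hq) (π := π) (σ := σ) v := by
  rcases h with ⟨x, y, rfl, rfl, h⟩ | ⟨x, y, rfl, rfl, h⟩
  · exact connRel_iff_key.mp h
  · exact (connRel_iff_key.mp h).symm

lemma K_reach {u v} (h : (connGraph d q hq π σ).Reachable u v) :
    K (hq := hq) (π := π) (σ := σ) u = K (hq := hq) (π := π) (σ := σ) v := by
  obtain ⟨p⟩ := h
  induction p with
  | nil => rfl
  | cons hadj _ ih => exact (K_adj hadj).trans ih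

lemma reach_inl_inl {x x' : Fin (d - q) → Bool}
    (h : keyL d q hq π σ x = keyL d q hq π σ x') :
    (connGraph d q hq π σ).Reachable (Sum.inl x) (Sum.inl x') := by
  set y := partnerR d q hq π σ x
  have h1 : (connGraph d q hq π σ).Adj (Sum.inl x) (Sum.inr y) :=
    adj_inl_inr.mpr (connRel_iff_key.mpr (keyR_partnerR x).symm)
  have h2 : (connGraph d q hq π σ).Adj (Sum.inl x') (Sum.inr y) :=
    adj_inl_inr.mpr (connRel_iff_key.mpr (h ▸ (keyR_partnerR x).symm))
  exact h1.reachable.trans h2.reachable.symm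

lemma reach_inr_inr {y y' : Fin (d - q) → Bool}
    (h : keyR d q hq π σ y = keyR d q hq π σ y') :
    (connGraph d q hq π σ).Reachable (Sum.inr y) (Sum.inr y') := by
  set x := partnerL d q hq π σ y
  have h1 : (connGraph d q hq π σ).Adj (Sum.inl x) (Sum.inr y) :=
    adj_inl_inr.mpr (connRel_iff_key.mpr (keyL_partnerL y))
  have h2 : (connGraph d q hq π σ).Adj (Sum.inl x) (Sum.inr y') :=
    adj_inl_inr.mpr (connRel_iff_key.mpr ((keyL_partnerL y).trans h))
  exact h1.reachable.symm.trans h2.reachable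

noncomputable def restrictEquiv {m : ℕ} (P : Fin m → Prop) (x₀ : Fin m → Bool) :
    {x : Fin m → Bool // ∀ i, P i → x i = x₀ i} ≃ ({i : Fin m // ¬ P i} → Bool) where
  toFun x i := x.1 i.1
  invFun h := ⟨fun i => if hp : P i then x₀ i else h ⟨i, hp⟩, fun i hi => dif_pos hi⟩
  left_inv x := by
    apply Subtype.ext
    funext i
    by_cases hp : P i
    · exact (dif_pos hp).trans (x.2 i hp).symm
    · exact dif_neg hp
  right_inv h := by
    funext i
    exact dif_neg i.2

lemma card_S_eq_card_T :
    Nat.card {i : Fin (d - q) // ∃ j, gR d q hq σ j = fL d q π i} =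
      Nat.card {j : Fin (d - q) // ∃ i, fL d q π i = gR d q hq σ j} := by
  have e1 : Function.Bijective
      (fun i : {i : Fin (d - q) // ∃ j, gR d q hq σ j = fL d q π i} =>
        (⟨fL d q π i.1, ⟨i.2.choose, i.2.choose_spec⟩, ⟨i.1, rfl⟩⟩ :
          ↥(Set.range (gR d q hq σ) ∩ Set.range (fL d q π)))) := by
    constructor
    · intro a b hab
      exact Subtype.ext (fL_inj d q π (congrArg Subtype.val hab))
    · rintro ⟨p, ⟨j, hj⟩, ⟨i, hi⟩⟩
      exact ⟨⟨i, ⟨j, by rw [hj, hi]⟩⟩, Subtype.ext hi⟩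
  have e2 : Function.Bijective
      (fun j : {j : Fin (d - q) // ∃ i, fL d q π i = gR d q hq σ j} =>
        (⟨gR d q hq σ j.1, ⟨j.1, rfl⟩, ⟨j.2.choose, j.2.choose_spec⟩⟩ :
          ↥(Set.range (gR d q hq σ) ∩ Set.range (fL d q π)))) := by
    constructor
    · intro a b hab
      exact Subtype.ext (gR_inj d q hq σ (congrArg Subtype.val hab))
    · rintro ⟨p, ⟨j, hj⟩, ⟨i, hi⟩⟩
      exact ⟨⟨j, ⟨i, by rw [hi, hj]⟩⟩, Subtype.ext hj⟩
  rw [Nat.card_congr (Equiv.ofBijective _ e1), Nat.card_congr (Equiv.ofBijective _ e2)]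

end Aux

/-- every connected component of the `q`-dimensional
sub-butterfly connectivity graph of a pair of `d`-dimensional layer-permuted
butterflies is a complete bipartite graph with the same number of vertices on
each side. -/
theorem connectivity_graph_components_complete_bipartite
    (d q : ℕ) (hq : q ≤ d) (π σ : Equiv.Perm (Fin d)) :
    (∀ x y : Fin (d - q) → Bool,
      (connGraph d q hq π σ).connectedComponentMk (Sum.inl x) =
        (connGraph d q hq π σ).connectedComponentMk (Sum.inr y) →
      (connGraph d q hq π σ).Adj (Sum.inl x) (Sum.inr y)) ∧
    (∀ C : (connGraph d q hq π σ).ConnectedComponent,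
      {x : Fin (d - q) → Bool | Sum.inl x ∈ C.supp}.ncard =
        {y : Fin (d - q) → Bool | Sum.inr y ∈ C.supp}.ncard) := by
  classical
  constructor
  · intro x y h
    have hr : (connGraph d q hq π σ).Reachable (Sum.inl x) (Sum.inr y) :=
      SimpleGraph.ConnectedComponent.eq.mp h
    have hk : keyL d q hq π σ x = keyR d q hq π σ y := K_reach hr
    exact adj_inl_inr.mpr (connRel_iff_key.mpr hk)
  · intro C
    obtain ⟨x₀, y₀, hC1, hC2⟩ : ∃ x₀ y₀,
        (connGraph d q hq π σ).connectedComponentMk (Sum.inl x₀) = C ∧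
        (connGraph d q hq π σ).connectedComponentMk (Sum.inr y₀) = C := by
      obtain ⟨v, hv⟩ := C.exists_rep
      cases v with
      | inl x₀ =>
        refine ⟨x₀, partnerR d q hq π σ x₀, hv, ?_⟩
        rw [← hv]
        exact SimpleGraph.ConnectedComponent.eq.mpr
          (adj_inl_inr.mpr (connRel_iff_key.mpr (keyR_partnerR x₀).symm)).reachable.symm
      | inr y₀ =>
        refine ⟨partnerL d q hq π σ y₀, y₀, ?_, hv⟩
        rw [← hv]
        exact SimpleGraph.ConnectedComponent.eq.mpr
          (adj_inl_inr.mpr (connRel_iff_key.mpr (keyL_partnerL y₀))).reachable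
    have hL : {x : Fin (d - q) → Bool | Sum.inl x ∈ C.supp} =
        {x | ∀ i, (∃ j, gR d q hq σ j = fL d q π i) → x i = x₀ i} := by
      ext x
      simp only [Set.mem_setOf_eq, SimpleGraph.ConnectedComponent.mem_supp_iff, ← hC1]
      constructor
      · intro h
        exact keyL_eq_keyL_iff.mp (K_reach (SimpleGraph.ConnectedComponent.eq.mp h))
      · intro h
        exact SimpleGraph.ConnectedComponent.eq.mpr
          (reach_inl_inl (keyL_eq_keyL_iff.mpr h))
    have hR : {y : Fin (d - q) → Bool | Sum.inr y ∈ C.supp} =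
        {y | ∀ j, (∃ i, fL d q π i = gR d q hq σ j) → y j = y₀ j} := by
      ext y
      simp only [Set.mem_setOf_eq, SimpleGraph.ConnectedComponent.mem_supp_iff, ← hC2]
      constructor
      · intro h
        exact keyR_eq_keyR_iff.mp (K_reach (SimpleGraph.ConnectedComponent.eq.mp h))
      · intro h
        exact SimpleGraph.ConnectedComponent.eq.mpr
          (reach_inr_inr (keyR_eq_keyR_iff.mpr h))
    rw [hL, hR, ← Nat.card_coe_set_eq, ← Nat.card_coe_set_eq]
    have eL : Nat.card ↥{x : Fin (d - q) → Bool |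
        ∀ i, (∃ j, gR d q hq σ j = fL d q π i) → x i = x₀ i} =
        2 ^ Fintype.card {i : Fin (d - q) // ¬ ∃ j, gR d q hq σ j = fL d q π i} := by
      refine Eq.trans (Nat.card_congr
        (restrictEquiv (fun i => ∃ j, gR d q hq σ j = fL d q π i) x₀)) ?_
      rw [Nat.card_eq_fintype_card, Fintype.card_fun, Fintype.card_bool]
    have eR : Nat.card ↥{y : Fin (d - q) → Bool |
        ∀ j, (∃ i, fL d q π i = gR d q hq σ j) → y j = y₀ j} =
        2 ^ Fintype.card {j : Fin (d - q) // ¬ ∃ i, fL d q π i = gR d q hq σ j} := by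
      refine Eq.trans (Nat.card_congr
        (restrictEquiv (fun j => ∃ i, fL d q π i = gR d q hq σ j) y₀)) ?_
      rw [Nat.card_eq_fintype_card, Fintype.card_fun, Fintype.card_bool]
    rw [eL, eR]
    congr 1
    rw [Fintype.card_subtype_compl, Fintype.card_subtype_compl]
    congr 1
    rw [← Nat.card_eq_fintype_card, ← Nat.card_eq_fintype_card]
    exact card_S_eq_card_T
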